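/- There is an absolute constant c ≥ 1 such that for all positive integers n and k, the family of all k-element subsets of {1,...,n} can be partitioned into pairwise disjoint elementary families E₁,...,E_N with Σᵢ |Eᵢ|^{1/2} ≤ ((2+√2)c)^{k-1}·k^{-1/2}·(2n/k)^{k/2}. -/

import Mathlib

/-- `I` is a set of consecutive natural numbers (an integer interval). -/
def IsNatInterval (I : Finset ℕ) : Prop :=
  ∀ a ∈ I, ∀ b ∈ I, ∀ c : ℕ, a ≤ c → c ≤ b → c ∈ I

/-- The operation `A ∗ B = {A ∪ B : A ∈ A, B ∈ B}`. -/
def famStar (A B : Finset (Finset ℕ)) : Finset (Finset ℕ) :=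
  (A ×ˢ B).image fun p => p.1 ∪ p.2

/-- `C(I₁,k₁) ∗ C(I₂,k₂) ∗ ⋯ ∗ C(I_ℓ,k_ℓ)` for a list of pairs `(Iⱼ, kⱼ)`. -/
def starList : List (Finset ℕ × ℕ) → Finset (Finset ℕ)
  | [] => {∅}
  | p :: t => famStar (Finset.powersetCard p.2 p.1) (starList t)

/-- An elementary family: `C(I₁,k₁) ∗ ⋯ ∗ C(I_ℓ,k_ℓ)` with `ℓ ≥ 1`, the `Iⱼ` pairwise
disjoint integer intervals, and `kⱼ ∈ {0,1,2}`. -/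
def IsElementary (E : Finset (Finset ℕ)) : Prop :=
  ∃ L : List (Finset ℕ × ℕ), L ≠ [] ∧ (∀ p ∈ L, IsNatInterval p.1 ∧ p.2 ≤ 2) ∧
    L.Pairwise (fun p q => Disjoint p.1 q.1) ∧ E = starList L

/-- `E₁, ..., E_N` is a partition of `A` into pairwise disjoint elementary families. -/
def IsElemPartition (A : Finset (Finset ℕ)) {N : ℕ} (E : Fin N → Finset (Finset ℕ)) : Prop :=
  (∀ i, IsElementary (E i)) ∧ (∀ i j, i ≠ j → Disjoint (E i) (E j)) ∧
    Finset.univ.biUnion E = A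

/-- The partition measure `π(A)`: the minimum of `Σᵢ |Eᵢ|^(1/2)` over all partitions of `A`
into pairwise disjoint elementary families. -/
noncomputable def piMeasure (A : Finset (Finset ℕ)) : ℝ :=
  sInf { s : ℝ | ∃ (N : ℕ) (E : Fin N → Finset (Finset ℕ)),
    IsElemPartition A E ∧ s = ∑ i, Real.sqrt ((E i).card) }

section Helpers

open Finset

lemma mem_famStar {A B : Finset (Finset ℕ)} {X : Finset ℕ} :
    X ∈ famStar A B ↔ ∃ a ∈ A, ∃ b ∈ B, a ∪ b = X := by
  simp only [famStar, Finset.mem_image, Finset.mem_product, Prod.exists]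
  constructor
  · rintro ⟨a, b, ⟨ha, hb⟩, h⟩; exact ⟨a, ha, b, hb, h⟩
  · rintro ⟨a, ha, b, hb, h⟩; exact ⟨a, b, ⟨ha, hb⟩, h⟩

lemma famStar_assoc (A B C : Finset (Finset ℕ)) :
    famStar (famStar A B) C = famStar A (famStar B C) := by
  ext X
  simp only [mem_famStar]
  constructor
  · rintro ⟨ab, ⟨a, ha, b, hb, rfl⟩, c, hc, rfl⟩
    exact ⟨a, ha, b ∪ c, ⟨b, hb, c, hc, rfl⟩, (Finset.union_assoc a b c).symm⟩
  · rintro ⟨a, ha, bc, ⟨b, hb, c, hc, rfl⟩, rfl⟩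
    exact ⟨a ∪ b, ⟨a, ha, b, hb, rfl⟩, c, hc, Finset.union_assoc a b c⟩

lemma famStar_empty_right (A : Finset (Finset ℕ)) : famStar A {∅} = A := by
  ext X; simp [mem_famStar]

lemma famStar_empty_left (A : Finset (Finset ℕ)) : famStar {∅} A = A := by
  ext X; simp [mem_famStar]

lemma starList_append (L M : List (Finset ℕ × ℕ)) :
    starList (L ++ M) = famStar (starList L) (starList M) := by
  induction L with
  | nil => simp [starList, famStar_empty_left]
  | cons p t ih => simp [starList, ih, famStar_assoc]

lemma starList_subset {L : List (Finset ℕ × ℕ)} {I : Finset ℕ}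
    (h : ∀ p ∈ L, p.1 ⊆ I) : ∀ X ∈ starList L, X ⊆ I := by
  induction L with
  | nil => intro X hX; simp [starList] at hX; simp [hX]
  | cons p t ih =>
    intro X hX
    rw [starList, mem_famStar] at hX
    obtain ⟨a, ha, b, hb, rfl⟩ := hX
    exact Finset.union_subset
      ((Finset.mem_powersetCard.mp ha).1.trans (h p List.mem_cons_self))
      (ih (fun q hq => h q (List.mem_cons_of_mem p hq)) b hb)

lemma singleIcc_isInterval (a b : ℕ) : IsNatInterval (Finset.Icc a b) := by
  intro x hx y hy c hxc hcy
  simp only [Finset.mem_Icc] at *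
  omega

section Part
open Finset

lemma sum_image_le' {α β : Type*} [DecidableEq α] [DecidableEq β] {s : Finset α} {f : α → β} {g : β → ℝ}
    (hg : ∀ b, 0 ≤ g b) : ∑ b ∈ s.image f, g b ≤ ∑ a ∈ s, g (f a) := by
  induction s using Finset.induction_on with
  | empty => simp
  | insert a s ha ih =>
    rw [Finset.image_insert, Finset.sum_insert ha]
    by_cases h : f a ∈ s.image f
    · rw [Finset.insert_eq_self.mpr h]
      linarith [hg (f a)]
    · rw [Finset.sum_insert h]; linarith

/-- The pieces of our partitions: elementary families with all intervals inside `I`. -/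
def GoodPiece (I : Finset ℕ) (E : Finset (Finset ℕ)) : Prop :=
  ∃ L : List (Finset ℕ × ℕ), L ≠ [] ∧ (∀ p ∈ L, IsNatInterval p.1 ∧ p.1 ⊆ I ∧ p.2 ≤ 2) ∧
    L.Pairwise (fun p q => Disjoint p.1 q.1) ∧ E = starList L

lemma GoodPiece.mem_subset {I E} (h : GoodPiece I E) : ∀ X ∈ E, X ⊆ I := by
  obtain ⟨L, -, hL, -, rfl⟩ := h
  exact starList_subset (fun p hp => (hL p hp).2.1)

lemma GoodPiece.mono {I J E} (hIJ : I ⊆ J) (h : GoodPiece I E) : GoodPiece J E := by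
  obtain ⟨L, h1, h2, h3, h4⟩ := h
  exact ⟨L, h1, fun p hp => ⟨(h2 p hp).1, (h2 p hp).2.1.trans hIJ, (h2 p hp).2.2⟩, h3, h4⟩

/-- `A` has a partition into good pieces over ground interval `I` with cost `≤ s`. -/
def GoodPart (I : Finset ℕ) (A : Finset (Finset ℕ)) (s : ℝ) : Prop :=
  ∃ S : Finset (Finset (Finset ℕ)),
    (∀ E ∈ S, GoodPiece I E) ∧
    ((S : Set (Finset (Finset ℕ))).Pairwise Disjoint) ∧
    S.biUnion id = A ∧
    ∑ E ∈ S, Real.sqrt E.card ≤ s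

lemma GoodPart.mono_s {I A s t} (h : GoodPart I A s) (hst : s ≤ t) : GoodPart I A t := by
  obtain ⟨S, h1, h2, h3, h4⟩ := h
  exact ⟨S, h1, h2, h3, h4.trans hst⟩

lemma GoodPart.nonneg {I A s} (h : GoodPart I A s) : 0 ≤ s := by
  obtain ⟨S, -, -, -, h4⟩ := h
  exact le_trans (Finset.sum_nonneg fun i _ => Real.sqrt_nonneg _) h4

lemma GoodPart.empty (I : Finset ℕ) : GoodPart I ∅ 0 :=
  ⟨∅, by simp, by simp, by simp, by simp⟩

lemma starList_single (I : Finset ℕ) (j : ℕ) :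
    starList [(I, j)] = Finset.powersetCard j I := by
  simp [starList, famStar_empty_right]

lemma GoodPart.single {I : Finset ℕ} (hI : IsNatInterval I) {j : ℕ} (hj : j ≤ 2) :
    GoodPart I (Finset.powersetCard j I) (Real.sqrt ((I.card).choose j)) := by
  refine ⟨{Finset.powersetCard j I}, ?_, ?_, ?_, ?_⟩
  · intro E hE
    rw [Finset.mem_singleton] at hE
    exact ⟨[(I, j)], by simp, by simpa using ⟨hI, hj⟩, by simp, by rw [hE, starList_single]⟩
  · simp
  · simp
  · simp [Finset.card_powersetCard]

lemma GoodPart.mem_subset_union {I A s} (h : GoodPart I A s) : True := trivial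

lemma GoodPart.union {I A B s t} (hA : GoodPart I A s) (hB : GoodPart I B t)
    (hAB : Disjoint A B) : GoodPart I (A ∪ B) (s + t) := by
  obtain ⟨S, hSel, hSdisj, hSun, hScost⟩ := hA
  obtain ⟨T, hTel, hTdisj, hTun, hTcost⟩ := hB
  have hSsub : ∀ x ∈ S, x ⊆ A := fun x hx => hSun ▸ Finset.subset_biUnion_of_mem id hx
  have hTsub : ∀ x ∈ T, x ⊆ B := fun x hx => hTun ▸ Finset.subset_biUnion_of_mem id hx
  refine ⟨S ∪ T, ?_, ?_, ?_, ?_⟩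
  · intro E hE
    rcases Finset.mem_union.mp hE with h | h
    exacts [hSel E h, hTel E h]
  · intro x hx y hy hxy
    simp only [Finset.coe_union, Set.mem_union, Finset.mem_coe] at hx hy
    rcases hx with hx | hx <;> rcases hy with hy | hy
    · exact hSdisj hx hy hxy
    · exact Finset.disjoint_of_subset_left (hSsub x hx)
        (Finset.disjoint_of_subset_right (hTsub y hy) hAB)
    · exact Finset.disjoint_of_subset_left (hTsub x hx)
        (Finset.disjoint_of_subset_right (hSsub y hy) hAB.symm)
    · exact hTdisj hx hy hxy
  · rw [← hSun, ← hTun]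
    ext x
    simp only [Finset.mem_biUnion, Finset.mem_union, id_eq]
    constructor
    · rintro ⟨E, hE | hE, hx⟩
      exacts [Or.inl ⟨E, hE, hx⟩, Or.inr ⟨E, hE, hx⟩]
    · rintro (⟨E, hE, hx⟩ | ⟨E, hE, hx⟩)
      exacts [⟨E, Or.inl hE, hx⟩, ⟨E, Or.inr hE, hx⟩]
  · calc ∑ E ∈ S ∪ T, Real.sqrt E.card
        ≤ (∑ E ∈ S ∪ T, Real.sqrt E.card) + ∑ E ∈ S ∩ T, Real.sqrt E.card := by
          have : (0:ℝ) ≤ ∑ E ∈ S ∩ T, Real.sqrt E.card :=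
            Finset.sum_nonneg fun i _ => Real.sqrt_nonneg _
          linarith
      _ = (∑ E ∈ S, Real.sqrt E.card) + ∑ E ∈ T, Real.sqrt E.card :=
          Finset.sum_union_inter
      _ ≤ s + t := add_le_add hScost hTcost

lemma GoodPart.biUnion {ι : Type*} [DecidableEq ι] {I : Finset ℕ} (T : Finset ι)
    (A : ι → Finset (Finset ℕ)) (s : ι → ℝ)
    (hdisj : ∀ i ∈ T, ∀ j ∈ T, i ≠ j → Disjoint (A i) (A j))
    (h : ∀ i ∈ T, GoodPart I (A i) (s i)) :
    GoodPart I (T.biUnion A) (∑ i ∈ T, s i) := by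
  induction T using Finset.induction_on with
  | empty => simpa using GoodPart.empty I
  | insert a T ha ih =>
    rw [Finset.biUnion_insert, Finset.sum_insert ha]
    refine GoodPart.union (h a (Finset.mem_insert_self a T))
      (ih (fun i hi j hj hij => hdisj i (Finset.mem_insert_of_mem hi) j
        (Finset.mem_insert_of_mem hj) hij)
        (fun i hi => h i (Finset.mem_insert_of_mem hi))) ?_
    rw [Finset.disjoint_biUnion_right]
    intro i hi
    exact hdisj a (Finset.mem_insert_self a T) i (Finset.mem_insert_of_mem hi)
      (fun h => ha (h ▸ hi))

end Part
section Star
open Finset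

lemma union_inter_eq_left {a b I : Finset ℕ} (ha : a ⊆ I) (hb : Disjoint b I) :
    (a ∪ b) ∩ I = a := by
  rw [Finset.union_inter_distrib_right, Finset.inter_eq_left.mpr ha,
    Finset.disjoint_iff_inter_eq_empty.mp hb, Finset.union_empty]

lemma mem_famStar_decomp {I J : Finset ℕ} {E F : Finset (Finset ℕ)}
    (hIJ : Disjoint I J) (hE : ∀ e ∈ E, e ⊆ I) (hF : ∀ f ∈ F, f ⊆ J) {X : Finset ℕ}
    (hX : X ∈ famStar E F) : X ∩ I ∈ E ∧ X ∩ J ∈ F := by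
  obtain ⟨a, ha, b, hb, rfl⟩ := mem_famStar.mp hX
  constructor
  · rw [union_inter_eq_left (hE a ha) (Finset.disjoint_of_subset_left (hF b hb) hIJ.symm)]
    exact ha
  · rw [Finset.union_comm,
      union_inter_eq_left (hF b hb) (Finset.disjoint_of_subset_left (hE a ha) hIJ)]
    exact hb

lemma card_famStar {I J : Finset ℕ} {E F : Finset (Finset ℕ)}
    (hIJ : Disjoint I J) (hE : ∀ e ∈ E, e ⊆ I) (hF : ∀ f ∈ F, f ⊆ J) :
    (famStar E F).card = E.card * F.card := by
  rw [famStar, Finset.card_image_of_injOn, Finset.card_product]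
  rintro ⟨a, b⟩ hab ⟨a', b'⟩ hab' h
  simp only [Finset.mem_coe, Finset.mem_product] at hab hab'
  simp only at h
  have ha : (a ∪ b) ∩ I = a :=
    union_inter_eq_left (hE a hab.1) (Finset.disjoint_of_subset_left (hF b hab.2) hIJ.symm)
  have ha' : (a' ∪ b') ∩ I = a' :=
    union_inter_eq_left (hE a' hab'.1) (Finset.disjoint_of_subset_left (hF b' hab'.2) hIJ.symm)
  have hb : (a ∪ b) ∩ J = b := by
    rw [Finset.union_comm]
    exact union_inter_eq_left (hF b hab.2) (Finset.disjoint_of_subset_left (hE a hab.1) hIJ)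
  have hb' : (a' ∪ b') ∩ J = b' := by
    rw [Finset.union_comm]
    exact union_inter_eq_left (hF b' hab'.2) (Finset.disjoint_of_subset_left (hE a' hab'.1) hIJ)
  have : a = a' := by rw [← ha, ← ha', h]
  have : b = b' := by rw [← hb, ← hb', h]
  simp_all

lemma GoodPiece.star {I J : Finset ℕ} {E F : Finset (Finset ℕ)} (hIJ : Disjoint I J)
    (hE : GoodPiece I E) (hF : GoodPiece J F) : GoodPiece (I ∪ J) (famStar E F) := by
  obtain ⟨L, hL0, hL1, hL2, rfl⟩ := hE
  obtain ⟨M, hM0, hM1, hM2, rfl⟩ := hF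
  refine ⟨L ++ M, by simp [hL0], ?_, ?_, (starList_append L M).symm⟩
  · intro p hp
    rcases List.mem_append.mp hp with h | h
    · exact ⟨(hL1 p h).1, (hL1 p h).2.1.trans Finset.subset_union_left, (hL1 p h).2.2⟩
    · exact ⟨(hM1 p h).1, (hM1 p h).2.1.trans Finset.subset_union_right, (hM1 p h).2.2⟩
  · rw [List.pairwise_append]
    exact ⟨hL2, hM2, fun p hp q hq => Finset.disjoint_of_subset_left (hL1 p hp).2.1
      (Finset.disjoint_of_subset_right (hM1 q hq).2.1 hIJ)⟩

lemma GoodPart.star {I J : Finset ℕ} {A B : Finset (Finset ℕ)} {s t : ℝ}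
    (hIJ : Disjoint I J) (hA : GoodPart I A s) (hB : GoodPart J B t) :
    GoodPart (I ∪ J) (famStar A B) (s * t) := by
  have hs := hA.nonneg
  have ht := hB.nonneg
  obtain ⟨S, hSel, hSdisj, hSun, hScost⟩ := hA
  obtain ⟨T, hTel, hTdisj, hTun, hTcost⟩ := hB
  have hSsub : ∀ x ∈ S, ∀ X ∈ x, X ⊆ I := fun x hx => (hSel x hx).mem_subset
  have hTsub : ∀ x ∈ T, ∀ X ∈ x, X ⊆ J := fun x hx => (hTel x hx).mem_subset
  refine ⟨(S ×ˢ T).image (fun p => famStar p.1 p.2), ?_, ?_, ?_, ?_⟩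
  · intro E hE
    obtain ⟨⟨x, y⟩, hxy, rfl⟩ := Finset.mem_image.mp hE
    simp only [Finset.mem_product] at hxy
    exact GoodPiece.star hIJ (hSel x hxy.1) (hTel y hxy.2)
  · intro x hx y hy hxy
    simp only [Finset.coe_image, Set.mem_image, Finset.mem_coe, Finset.mem_product,
      Prod.exists] at hx hy
    obtain ⟨E, F, ⟨hES, hFT⟩, rfl⟩ := hx
    obtain ⟨E', F', ⟨hES', hFT'⟩, rfl⟩ := hy
    by_contra hnd
    obtain ⟨X, hX1, hX2⟩ := Finset.not_disjoint_iff.mp hnd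
    obtain ⟨h1, h2⟩ := mem_famStar_decomp hIJ (hSsub E hES) (hTsub F hFT) hX1
    obtain ⟨h1', h2'⟩ := mem_famStar_decomp hIJ (hSsub E' hES') (hTsub F' hFT') hX2
    have hEE : E = E' := by
      by_contra hne
      exact Finset.not_disjoint_iff.mpr ⟨X ∩ I, h1, h1'⟩ (hSdisj hES hES' hne)
    have hFF : F = F' := by
      by_contra hne
      exact Finset.not_disjoint_iff.mpr ⟨X ∩ J, h2, h2'⟩ (hTdisj hFT hFT' hne)
    exact hxy (by rw [hEE, hFF])
  · ext X
    simp only [Finset.mem_biUnion, Finset.mem_image, Finset.mem_product, Prod.exists, id_eq,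
      mem_famStar]
    constructor
    · rintro ⟨x, ⟨E, F, ⟨hES, hFT⟩, rfl⟩, hX⟩
      obtain ⟨a, ha, b, hb, rfl⟩ := mem_famStar.mp hX
      exact ⟨a, by rw [← hSun]; exact Finset.mem_biUnion.mpr ⟨E, hES, ha⟩,
             b, by rw [← hTun]; exact Finset.mem_biUnion.mpr ⟨F, hFT, hb⟩, rfl⟩
    · rintro ⟨a, ha, b, hb, rfl⟩
      rw [← hSun] at ha
      rw [← hTun] at hb
      obtain ⟨E, hES, haE⟩ := Finset.mem_biUnion.mp ha
      obtain ⟨F, hFT, hbF⟩ := Finset.mem_biUnion.mp hb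
      exact ⟨famStar E F, ⟨E, F, ⟨hES, hFT⟩, rfl⟩, mem_famStar.mpr ⟨a, haE, b, hbF, rfl⟩⟩
  · calc ∑ E ∈ (S ×ˢ T).image (fun p => famStar p.1 p.2), Real.sqrt E.card
        ≤ ∑ p ∈ S ×ˢ T, Real.sqrt ((famStar p.1 p.2).card) :=
          sum_image_le' (fun _ => Real.sqrt_nonneg _)
      _ = ∑ p ∈ S ×ˢ T, Real.sqrt p.1.card * Real.sqrt p.2.card := by
          refine Finset.sum_congr rfl fun p hp => ?_
          simp only [Finset.mem_product] at hp
          rw [card_famStar hIJ (hSsub p.1 hp.1) (hTsub p.2 hp.2), Nat.cast_mul,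
            Real.sqrt_mul (Nat.cast_nonneg _)]
      _ = (∑ E ∈ S, Real.sqrt E.card) * ∑ F ∈ T, Real.sqrt F.card := by
          rw [Finset.sum_mul_sum, Finset.sum_product]
      _ ≤ s * t := by
          apply mul_le_mul hScost hTcost (Finset.sum_nonneg fun i _ => Real.sqrt_nonneg _) hs

end Star
section Split
open Finset

lemma mem_piece_iff {L R : Finset ℕ} (hLR : Disjoint L R) {j m : ℕ} {X : Finset ℕ} :
    X ∈ famStar (Finset.powersetCard j L) (Finset.powersetCard m R) ↔
      X ⊆ L ∪ R ∧ (X ∩ L).card = j ∧ (X ∩ R).card = m := by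
  constructor
  · intro hX
    obtain ⟨a, ha, b, hb, rfl⟩ := mem_famStar.mp hX
    rw [Finset.mem_powersetCard] at ha hb
    have hXL : (a ∪ b) ∩ L = a :=
      union_inter_eq_left ha.1 (Finset.disjoint_of_subset_left hb.1 hLR.symm)
    have hXR : (a ∪ b) ∩ R = b := by
      rw [Finset.union_comm]
      exact union_inter_eq_left hb.1 (Finset.disjoint_of_subset_left ha.1 hLR)
    exact ⟨Finset.union_subset_union ha.1 hb.1, by rw [hXL]; exact ha.2,
      by rw [hXR]; exact hb.2⟩
  · rintro ⟨hX, h1, h2⟩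
    have hu : (X ∩ L) ∪ (X ∩ R) = X := by
      rw [← Finset.inter_union_distrib_left, Finset.inter_eq_left.mpr hX]
    exact mem_famStar.mpr ⟨X ∩ L, Finset.mem_powersetCard.mpr ⟨Finset.inter_subset_right, h1⟩,
      X ∩ R, Finset.mem_powersetCard.mpr ⟨Finset.inter_subset_right, h2⟩, hu⟩

lemma powersetCard_union_eq {L R : Finset ℕ} (hLR : Disjoint L R) (k : ℕ) :
    Finset.powersetCard k (L ∪ R) =
      (Finset.range (k+1)).biUnion
        (fun j => famStar (Finset.powersetCard j L) (Finset.powersetCard (k-j) R)) := by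
  ext X
  simp only [Finset.mem_powersetCard, Finset.mem_biUnion, Finset.mem_range,
    mem_piece_iff hLR]
  constructor
  · rintro ⟨hX, hcard⟩
    have hu : (X ∩ L) ∪ (X ∩ R) = X := by
      rw [← Finset.inter_union_distrib_left, Finset.inter_eq_left.mpr hX]
    have hdis : Disjoint (X ∩ L) (X ∩ R) :=
      Finset.disjoint_of_subset_left Finset.inter_subset_right
        (Finset.disjoint_of_subset_right Finset.inter_subset_right hLR)
    have hsum : (X ∩ L).card + (X ∩ R).card = k := by
      rw [← Finset.card_union_of_disjoint hdis, hu, hcard]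
    exact ⟨(X ∩ L).card, by omega, hX, rfl, by omega⟩
  · rintro ⟨j, hj, hX, h1, h2⟩
    have hu : (X ∩ L) ∪ (X ∩ R) = X := by
      rw [← Finset.inter_union_distrib_left, Finset.inter_eq_left.mpr hX]
    have hdis : Disjoint (X ∩ L) (X ∩ R) :=
      Finset.disjoint_of_subset_left Finset.inter_subset_right
        (Finset.disjoint_of_subset_right Finset.inter_subset_right hLR)
    refine ⟨hX, ?_⟩
    rw [← hu, Finset.card_union_of_disjoint hdis, h1, h2]
    omega

lemma piece_pairwise_disjoint {L R : Finset ℕ} (hLR : Disjoint L R) (k : ℕ) :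
    ∀ i ∈ Finset.range (k+1), ∀ j ∈ Finset.range (k+1), i ≠ j →
      Disjoint (famStar (Finset.powersetCard i L) (Finset.powersetCard (k-i) R))
        (famStar (Finset.powersetCard j L) (Finset.powersetCard (k-j) R)) := by
  intro i _ j _ hij
  rw [Finset.disjoint_left]
  intro X hXi hXj
  rw [mem_piece_iff hLR] at hXi hXj
  exact hij (hXi.2.1 ▸ hXj.2.1)

end Split
section NatLemmas

lemma half_pow_choose (n : ℕ) : ∀ k, 2^k * Nat.choose (n/2) k ≤ Nat.choose n k := by
  intro k
  induction k with
  | zero => simp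
  | succ k ih =>
    set h := n / 2 with hh
    by_cases hk : h ≤ k
    · rw [Nat.choose_eq_zero_of_lt (by omega)]
      simp
    · have key : 2^(k+1) * Nat.choose h (k+1) * (k+1) ≤ Nat.choose n (k+1) * (k+1) := by
        calc 2^(k+1) * Nat.choose h (k+1) * (k+1)
            = 2^(k+1) * (Nat.choose h (k+1) * (k+1)) := by ring
          _ = 2^(k+1) * (Nat.choose h k * (h - k)) := by rw [Nat.choose_succ_right_eq]
          _ = (2^k * Nat.choose h k) * (2*(h - k)) := by ring
          _ ≤ Nat.choose n k * (n - k) := Nat.mul_le_mul ih (by omega)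
          _ = Nat.choose n (k+1) * (k+1) := (Nat.choose_succ_right_eq n k).symm
      exact Nat.le_of_mul_le_mul_right key (by omega)

lemma half_up_pow_choose (n : ℕ) : ∀ k, 2^k * Nat.choose ((n+1)/2) (k+1) ≤ Nat.choose n (k+1) := by
  intro k
  induction k with
  | zero => simp [Nat.choose_one_right]; omega
  | succ k ih =>
    set h := (n+1) / 2 with hh
    by_cases hk : h ≤ k+1
    · rw [Nat.choose_eq_zero_of_lt (by omega)]
      simp
    · have key : 2^(k+1) * Nat.choose h (k+2) * (k+2) ≤ Nat.choose n (k+2) * (k+2) := by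
        calc 2^(k+1) * Nat.choose h (k+2) * (k+2)
            = 2^(k+1) * (Nat.choose h (k+2) * (k+2)) := by ring
          _ = 2^(k+1) * (Nat.choose h (k+1) * (h - (k+1))) := by rw [Nat.choose_succ_right_eq]
          _ = (2^k * Nat.choose h (k+1)) * (2*(h - (k+1))) := by ring
          _ ≤ Nat.choose n (k+1) * (n - (k+1)) := Nat.mul_le_mul ih (by omega)
          _ = Nat.choose n (k+2) * (k+2) := (Nat.choose_succ_right_eq n (k+1)).symm
      exact Nat.le_of_mul_le_mul_right key (by omega)

lemma vandermonde_range (l r k : ℕ) :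
    ∑ j ∈ Finset.range (k+1), Nat.choose l j * Nat.choose r (k-j) = Nat.choose (l+r) k := by
  rw [Nat.add_choose_eq, Finset.Nat.sum_antidiagonal_eq_sum_range_succ_mk]

end NatLemmas
section Psi
open Finset

noncomputable def psi : ℕ → ℝ := fun k => if k = 0 then 1 else 500^(k-1) / (k:ℝ)^2

lemma psi_zero : psi 0 = 1 := by simp [psi]

lemma psi_of_pos {k : ℕ} (hk : 1 ≤ k) : psi k = 500^(k-1) / (k:ℝ)^2 := by
  have : k ≠ 0 := by omega
  simp [psi, this]

lemma psi_pos (k : ℕ) : 0 < psi k := by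
  unfold psi
  split
  · norm_num
  · next h =>
    have : (0:ℝ) < (k:ℝ) := by exact_mod_cast Nat.pos_of_ne_zero h
    positivity

lemma basel (m : ℕ) : ∑ j ∈ Finset.range m, (1:ℝ)/((j:ℝ)+1)^2 ≤ 2 - 2/((m:ℝ)+1) := by
  induction m with
  | zero => norm_num
  | succ m ih =>
    rw [Finset.sum_range_succ]
    have h1 : (0:ℝ) < (m:ℝ) + 1 := by positivity
    have h2 : (0:ℝ) < (m:ℝ) + 2 := by positivity
    have key : 1/((m:ℝ)+1)^2 + 2/((m:ℝ)+2) ≤ 2/((m:ℝ)+1) := by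
      rw [div_add_div _ _ (by positivity) (by positivity),
        div_le_div_iff₀ (by positivity) h1]
      nlinarith
    push_cast
    have h3 : (2:ℝ)/((m:ℝ)+1+1) = 2/((m:ℝ)+2) := by ring_nf
    rw [h3]
    linarith

lemma term_bound (x y : ℝ) (hx : 1 ≤ x) (hy : 1 ≤ y) :
    1/(x^2*y^2) ≤ 2/(x+y)^2 * (1/x^2 + 1/y^2) := by
  have hx0 : (0:ℝ) < x := by linarith
  have hy0 : (0:ℝ) < y := by linarith
  rw [div_add_div _ _ (by positivity) (by positivity), div_mul_div_comm,
    div_le_div_iff₀ (by positivity) (by positivity)]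
  nlinarith [sq_nonneg (x - y), mul_pos hx0 hy0, sq_nonneg (x*y), sq_nonneg (x+y),
    mul_pos (mul_pos hx0 hy0) (mul_pos hx0 hy0)]

lemma recip_sq_sum_bound {k : ℕ} (hk : 2 ≤ k) :
    ∑ j ∈ Finset.range (k-1), 1/(((j:ℝ)+1)^2 * ((k:ℝ)-((j:ℝ)+1))^2) ≤ 8/(k:ℝ)^2 := by
  have hk1 : (1:ℝ) ≤ (k:ℝ) := by exact_mod_cast (by omega : 1 ≤ k)
  have e1 : ∑ j ∈ Finset.range (k-1), (1:ℝ)/((j:ℝ)+1)^2 ≤ 2 := by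
    refine (basel (k-1)).trans ?_
    have : (0:ℝ) ≤ 2/(((k-1:ℕ):ℝ)+1) := div_nonneg (by norm_num) (by positivity)
    linarith
  have e2 : ∑ j ∈ Finset.range (k-1), (1:ℝ)/((k:ℝ)-((j:ℝ)+1))^2 ≤ 2 := by
    have reflect := Finset.sum_range_reflect (fun j => (1:ℝ)/((j:ℝ)+1)^2) (k-1)
    have hcong : ∀ j ∈ Finset.range (k-1),
        (1:ℝ)/((k:ℝ)-((j:ℝ)+1))^2 = (1:ℝ)/(((k-1-1-j:ℕ):ℝ)+1)^2 := by
      intro j hj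
      rw [Finset.mem_range] at hj
      have h0 : k-1-1-j = k-(2+j) := by omega
      have hc : ((k-1-1-j:ℕ):ℝ) = (k:ℝ)-2-(j:ℝ) := by
        rw [h0, Nat.cast_sub (by omega)]
        push_cast
        ring
      rw [hc]
      ring_nf
    calc ∑ j ∈ Finset.range (k-1), (1:ℝ)/((k:ℝ)-((j:ℝ)+1))^2
        = ∑ j ∈ Finset.range (k-1), (1:ℝ)/(((k-1-1-j:ℕ):ℝ)+1)^2 :=
          Finset.sum_congr rfl hcong
      _ = ∑ j ∈ Finset.range (k-1), (1:ℝ)/((j:ℝ)+1)^2 := reflect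
      _ ≤ 2 := e1
  have main : ∀ j ∈ Finset.range (k-1),
      1/(((j:ℝ)+1)^2 * ((k:ℝ)-((j:ℝ)+1))^2) ≤
        2/(k:ℝ)^2 * (1/((j:ℝ)+1)^2 + 1/((k:ℝ)-((j:ℝ)+1))^2) := by
    intro j hj
    rw [Finset.mem_range] at hj
    have h1 : (1:ℝ) ≤ (j:ℝ)+1 := by
      have : (0:ℝ) ≤ (j:ℝ) := Nat.cast_nonneg j
      linarith
    have h2 : (1:ℝ) ≤ (k:ℝ)-((j:ℝ)+1) := by
      have : ((j:ℝ)) + 2 ≤ (k:ℝ) := by exact_mod_cast (by omega : j + 2 ≤ k)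
      linarith
    have hb := term_bound ((j:ℝ)+1) ((k:ℝ)-((j:ℝ)+1)) h1 h2
    have hsum : ((j:ℝ)+1) + ((k:ℝ)-((j:ℝ)+1)) = (k:ℝ) := by ring
    rwa [hsum] at hb
  calc ∑ j ∈ Finset.range (k-1), 1/(((j:ℝ)+1)^2 * ((k:ℝ)-((j:ℝ)+1))^2)
      ≤ ∑ j ∈ Finset.range (k-1),
          2/(k:ℝ)^2 * (1/((j:ℝ)+1)^2 + 1/((k:ℝ)-((j:ℝ)+1))^2) :=
        Finset.sum_le_sum main
    _ = 2/(k:ℝ)^2 * ((∑ j ∈ Finset.range (k-1), (1:ℝ)/((j:ℝ)+1)^2)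
          + ∑ j ∈ Finset.range (k-1), (1:ℝ)/((k:ℝ)-((j:ℝ)+1))^2) := by
        rw [← Finset.sum_add_distrib, ← Finset.mul_sum]
    _ ≤ 2/(k:ℝ)^2 * 4 := by
        have h0 : (0:ℝ) ≤ 2/(k:ℝ)^2 := by positivity
        have := mul_le_mul_of_nonneg_left (by linarith : (∑ j ∈ Finset.range (k-1),
          (1:ℝ)/((j:ℝ)+1)^2) + ∑ j ∈ Finset.range (k-1), (1:ℝ)/((k:ℝ)-((j:ℝ)+1))^2 ≤ 4) h0
        linarith
    _ = 8/(k:ℝ)^2 := by ring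

end Psi
section Analytic
open Finset

lemma sqrt_le_scale {x y c : ℝ} (hc : 0 ≤ c) (h : x ≤ c^2 * y) : Real.sqrt x ≤ c * Real.sqrt y := by
  have h1 : Real.sqrt x ≤ Real.sqrt (c^2*y) := Real.sqrt_le_sqrt h
  rwa [Real.sqrt_mul (sq_nonneg c), Real.sqrt_sq hc] at h1

lemma conv_psi {k : ℕ} (hk : 3 ≤ k) :
    ∑ j ∈ Finset.range (k-1), psi (j+1) * psi (k-(j+1)) ≤ 2/125 * psi k := by
  have hterm : ∀ j ∈ Finset.range (k-1),
      psi (j+1) * psi (k-(j+1)) =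
        500^(k-2) * (1/(((j:ℝ)+1)^2 * ((k:ℝ)-((j:ℝ)+1))^2)) := by
    intro j hj
    rw [Finset.mem_range] at hj
    rw [psi_of_pos (by omega), psi_of_pos (by omega : 1 ≤ k-(j+1))]
    have h1 : ((k-(j+1):ℕ):ℝ) = (k:ℝ)-((j:ℝ)+1) := by
      rw [Nat.cast_sub (by omega)]
      push_cast
      ring
    have h2 : (j+1)-1 = j := by omega
    have h3 : (500:ℝ)^j * 500^((k-(j+1))-1) = 500^(k-2) := by
      rw [← pow_add]
      congr 1
      omega
    rw [h2, h1]
    push_cast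
    rw [div_mul_div_comm, h3]
    ring
  rw [Finset.sum_congr rfl hterm, ← Finset.mul_sum]
  have hb := recip_sq_sum_bound (by omega : 2 ≤ k)
  have h500 : (0:ℝ) < 500^(k-2) := by positivity
  calc (500:ℝ)^(k-2) * ∑ j ∈ Finset.range (k-1), 1/(((j:ℝ)+1)^2 * ((k:ℝ)-((j:ℝ)+1))^2)
      ≤ 500^(k-2) * (8/(k:ℝ)^2) := mul_le_mul_of_nonneg_left hb h500.le
    _ = 2/125 * psi k := by
        rw [psi_of_pos (by omega)]
        have : (500:ℝ)^(k-1) = 500^(k-2) * 500 := by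
          rw [← pow_succ]
          congr 1
          omega
        rw [this]
        ring

lemma sqrt_choose_low {n k : ℕ} (hk : 3 ≤ k) :
    Real.sqrt ((n/2).choose k : ℝ) ≤ Real.sqrt 2/4 * Real.sqrt (n.choose k : ℝ) := by
  apply sqrt_le_scale (by positivity)
  have h1 : 8 * (n/2).choose k ≤ n.choose k := by
    calc 8 * (n/2).choose k ≤ 2^k * (n/2).choose k := by
          have : 8 ≤ 2^k := by
            calc 8 = 2^3 := by norm_num
            _ ≤ 2^k := Nat.pow_le_pow_right (by norm_num) hk
          exact Nat.mul_le_mul_right _ this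
      _ ≤ n.choose k := half_pow_choose n k
  have h2 : (8:ℝ) * ((n/2).choose k : ℝ) ≤ (n.choose k : ℝ) := by exact_mod_cast h1
  have h3 : (Real.sqrt 2/4)^2 = 1/8 := by
    rw [div_pow, Real.sq_sqrt (by norm_num : (0:ℝ) ≤ 2)]
    norm_num
  rw [h3]
  linarith

lemma sqrt_choose_high {n k : ℕ} (hk : 3 ≤ k) :
    Real.sqrt (((n+1)/2).choose k : ℝ) ≤ 1/2 * Real.sqrt (n.choose k : ℝ) := by
  apply sqrt_le_scale (by norm_num)
  have h1 : 4 * ((n+1)/2).choose k ≤ n.choose k := by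
    have hup := half_up_pow_choose n (k-1)
    have hkk : k - 1 + 1 = k := by omega
    rw [hkk] at hup
    calc 4 * ((n+1)/2).choose k ≤ 2^(k-1) * ((n+1)/2).choose k := by
          have : 4 ≤ 2^(k-1) := by
            calc 4 = 2^2 := by norm_num
            _ ≤ 2^(k-1) := Nat.pow_le_pow_right (by norm_num) (by omega)
          exact Nat.mul_le_mul_right _ this
      _ ≤ n.choose k := hup
  have h2 : (4:ℝ) * (((n+1)/2).choose k : ℝ) ≤ (n.choose k : ℝ) := by exact_mod_cast h1
  have h3 : ((1:ℝ)/2)^2 = 1/4 := by norm_num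
  rw [h3]
  linarith

lemma numeric_combine : Real.sqrt 2/4 + 1/2 + Real.sqrt (2/125) ≤ 1 := by
  have h1 : Real.sqrt 2 ≤ 1.415 := by
    rw [show (1.415:ℝ) = Real.sqrt (1.415^2) from (Real.sqrt_sq (by norm_num)).symm]
    apply Real.sqrt_le_sqrt
    norm_num
  have h2 : Real.sqrt (2/125) ≤ 0.127 := by
    rw [show (0.127:ℝ) = Real.sqrt (0.127^2) from (Real.sqrt_sq (by norm_num)).symm]
    apply Real.sqrt_le_sqrt
    norm_num
  linarith

lemma nat_middle_le (l r k m : ℕ) (hk : k = m + 2) :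
    ∑ j ∈ Finset.range (m+1), (l.choose (j+1)) * (r.choose (k-(j+1))) ≤ (l+r).choose k := by
  rw [← vandermonde_range l r k]
  have h1 : ∑ j ∈ Finset.range (k+1), l.choose j * r.choose (k-j)
      = (∑ j ∈ Finset.range (m+2), l.choose (j+1) * r.choose (k-(j+1)))
        + l.choose 0 * r.choose (k-0) := by
    rw [hk]
    exact Finset.sum_range_succ' _ (m+2)
  rw [h1]
  have h2 : ∑ j ∈ Finset.range (m+1), l.choose (j+1) * r.choose (k-(j+1))
      ≤ ∑ j ∈ Finset.range (m+2), l.choose (j+1) * r.choose (k-(j+1)) :=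
    Finset.sum_le_sum_of_subset (Finset.range_subset_range.mpr (by omega))
  omega

lemma analytic {n k : ℕ} (hk : 3 ≤ k) :
    ∑ j ∈ Finset.range (k+1),
      (Real.sqrt (psi j) * Real.sqrt (((n+1)/2).choose j : ℝ)) *
      (Real.sqrt (psi (k-j)) * Real.sqrt ((n/2).choose (k-j) : ℝ))
      ≤ Real.sqrt (psi k) * Real.sqrt (n.choose k : ℝ) := by
  obtain ⟨m, rfl⟩ : ∃ m, k = m + 2 := ⟨k - 2, by omega⟩
  set l := (n+1)/2 with hl
  set r := n/2 with hr
  have hlr : l + r = n := by omega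
  set f : ℕ → ℝ := fun j =>
    (Real.sqrt (psi j) * Real.sqrt ((l.choose j : ℕ) : ℝ)) *
    (Real.sqrt (psi (m+2-j)) * Real.sqrt (((r.choose (m+2-j) : ℕ)) : ℝ)) with hf
  have hsplit : ∑ j ∈ Finset.range (m+3), f j
      = (∑ j ∈ Finset.range (m+1), f (j+1)) + f 0 + f (m+2) := by
    rw [Finset.sum_range_succ, Finset.sum_range_succ' f (m+1)]
  have hf0 : f 0 = Real.sqrt (psi (m+2)) * Real.sqrt (r.choose (m+2) : ℝ) := by
    simp [hf, psi_zero]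
  have hfk : f (m+2) = Real.sqrt (psi (m+2)) * Real.sqrt (l.choose (m+2) : ℝ) := by
    simp [hf, psi_zero]
  have hpsis : (0:ℝ) ≤ Real.sqrt (psi (m+2)) := Real.sqrt_nonneg _
  have hb0 : f 0 ≤ Real.sqrt (psi (m+2)) * (Real.sqrt 2/4 * Real.sqrt (n.choose (m+2) : ℝ)) := by
    rw [hf0]
    exact mul_le_mul_of_nonneg_left (sqrt_choose_low (by omega)) hpsis
  have hbk : f (m+2) ≤ Real.sqrt (psi (m+2)) * (1/2 * Real.sqrt (n.choose (m+2) : ℝ)) := by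
    rw [hfk]
    exact mul_le_mul_of_nonneg_left (sqrt_choose_high (by omega)) hpsis
  have hmid : ∑ j ∈ Finset.range (m+1), f (j+1)
      ≤ Real.sqrt (2/125) * Real.sqrt (psi (m+2)) * Real.sqrt (n.choose (m+2) : ℝ) := by
    have hterm : ∀ j ∈ Finset.range (m+1), f (j+1)
        = Real.sqrt (psi (j+1) * psi (m+2-(j+1))) *
          Real.sqrt ((l.choose (j+1) * r.choose (m+2-(j+1)) : ℕ) : ℝ) := by
      intro j _
      rw [hf]
      simp only []
      rw [Real.sqrt_mul (psi_pos (j+1)).le, Nat.cast_mul,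
        Real.sqrt_mul (Nat.cast_nonneg _)]
      ring
    rw [Finset.sum_congr rfl hterm]
    have hcs := Real.sum_sqrt_mul_sqrt_le (Finset.range (m+1))
      (f := fun j => psi (j+1) * psi (m+2-(j+1)))
      (g := fun j => ((l.choose (j+1) * r.choose (m+2-(j+1)) : ℕ) : ℝ))
      (fun j => (mul_pos (psi_pos _) (psi_pos _)).le)
      (fun j => Nat.cast_nonneg _)
    refine hcs.trans ?_
    have hA : Real.sqrt (∑ j ∈ Finset.range (m+1), psi (j+1) * psi (m+2-(j+1)))
        ≤ Real.sqrt (2/125) * Real.sqrt (psi (m+2)) := by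
      rw [← Real.sqrt_mul (by norm_num : (0:ℝ) ≤ 2/125)]
      apply Real.sqrt_le_sqrt
      have := conv_psi (k := m+2) (by omega)
      have hmm : m+2-1 = m+1 := by omega
      rwa [hmm] at this
    have hB : Real.sqrt ((∑ j ∈ Finset.range (m+1),
        ((l.choose (j+1) * r.choose (m+2-(j+1)) : ℕ) : ℝ)))
        ≤ Real.sqrt (n.choose (m+2) : ℝ) := by
      apply Real.sqrt_le_sqrt
      rw [← Nat.cast_sum]
      have := nat_middle_le l r (m+2) m rfl
      rw [hlr] at this
      exact_mod_cast this
    calc Real.sqrt (∑ j ∈ Finset.range (m+1), psi (j+1) * psi (m+2-(j+1))) *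
          Real.sqrt (∑ j ∈ Finset.range (m+1),
            ((l.choose (j+1) * r.choose (m+2-(j+1)) : ℕ) : ℝ))
        ≤ (Real.sqrt (2/125) * Real.sqrt (psi (m+2))) * Real.sqrt (n.choose (m+2) : ℝ) :=
          mul_le_mul hA hB (Real.sqrt_nonneg _) (by positivity)
      _ = Real.sqrt (2/125) * Real.sqrt (psi (m+2)) * Real.sqrt (n.choose (m+2) : ℝ) := by ring
  rw [hsplit]
  have hnum := numeric_combine
  have hCn : (0:ℝ) ≤ Real.sqrt (n.choose (m+2) : ℝ) := Real.sqrt_nonneg _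
  nlinarith [hb0, hbk, hmid, mul_nonneg hpsis hCn,
    mul_le_mul_of_nonneg_left hnum (mul_nonneg hpsis hCn)]

end Analytic
section Main
open Finset

lemma one_le_sqrt_psi {k : ℕ} (hk : k ≤ 2) : 1 ≤ Real.sqrt (psi k) := by
  rw [Real.one_le_sqrt]
  interval_cases k
  · rw [psi_zero]
  · rw [psi_of_pos le_rfl]; norm_num
  · rw [psi_of_pos (by norm_num)]; norm_num

lemma main_induction : ∀ n : ℕ, ∀ a b k : ℕ, (Finset.Icc a b).card = n →
    GoodPart (Finset.Icc a b) (Finset.powersetCard k (Finset.Icc a b))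
      (Real.sqrt (psi k) * Real.sqrt ((n.choose k : ℕ) : ℝ)) := by
  intro n
  induction n using Nat.strong_induction_on with
  | _ n ih =>
    intro a b k hcard
    by_cases hk2 : k ≤ 2
    · -- base cases : a single elementary family
      refine (GoodPart.single (singleIcc_isInterval a b) hk2).mono_s ?_
      rw [hcard]
      exact le_mul_of_one_le_left (Real.sqrt_nonneg _) (one_le_sqrt_psi hk2)
    · push_neg at hk2
      by_cases hn1 : n ≤ 1
      · -- the family is empty
        have hempty : Finset.powersetCard k (Finset.Icc a b) = ∅ :=
          Finset.powersetCard_eq_empty.mpr (by omega)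
        rw [hempty]
        exact (GoodPart.empty _).mono_s (by positivity)
      · -- recursive split
        push_neg at hn1
        have hab : b + 1 - a = n := by rw [← Nat.card_Icc]; exact hcard
        set l := (n+1)/2 with hl
        set r := n/2 with hr
        set m := a + l - 1 with hm
        have hfacts : 1 ≤ l ∧ l ≤ n - 1 ∧ l + r = n ∧ a ≤ m ∧ m < b := by omega
        have hcardL : (Finset.Icc a m).card = l := by rw [Nat.card_Icc]; omega
        have hcardR : (Finset.Icc (m+1) b).card = r := by rw [Nat.card_Icc]; omega
        have hLR : Disjoint (Finset.Icc a m) (Finset.Icc (m+1) b) := by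
          simp only [Finset.disjoint_left, Finset.mem_Icc]
          omega
        have hunion : Finset.Icc a m ∪ Finset.Icc (m+1) b = Finset.Icc a b := by
          ext x
          simp only [Finset.mem_union, Finset.mem_Icc]
          omega
        have hsplit := powersetCard_union_eq hLR k
        rw [hunion] at hsplit
        rw [hsplit]
        have hstep : ∀ j ∈ Finset.range (k+1),
            GoodPart (Finset.Icc a b)
              (famStar (Finset.powersetCard j (Finset.Icc a m))
                (Finset.powersetCard (k-j) (Finset.Icc (m+1) b)))
              ((Real.sqrt (psi j) * Real.sqrt ((l.choose j : ℕ) : ℝ)) *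
               (Real.sqrt (psi (k-j)) * Real.sqrt ((r.choose (k-j) : ℕ) : ℝ))) := by
          intro j _
          have hL := ih l (by omega) a m j hcardL
          have hR := ih r (by omega) (m+1) b (k-j) hcardR
          have := GoodPart.star hLR hL hR
          rwa [hunion] at this
        have hparts := GoodPart.biUnion (Finset.range (k+1)) _ _
          (piece_pairwise_disjoint hLR k) hstep
        refine hparts.mono_s ?_
        have := analytic (n := n) (k := k) (by omega)
        rw [← hl, ← hr] at this
        exact this

end Main
section Final
open Finset

lemma pow_self_le_three_pow_factorial (k : ℕ) : ((k:ℝ))^k ≤ 3^k * (Nat.factorial k : ℝ) := by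
  have hf : (0:ℝ) < (Nat.factorial k : ℝ) := by exact_mod_cast Nat.factorial_pos k
  have hterm : ((k:ℝ))^k / (Nat.factorial k : ℝ) ≤ Real.exp k := by
    refine le_trans ?_ (Real.sum_le_exp_of_nonneg (Nat.cast_nonneg k) (k+1))
    exact Finset.single_le_sum (f := fun i => (k:ℝ)^i / (Nat.factorial i : ℝ))
      (fun i _ => by positivity) (Finset.self_mem_range_succ k)
  have hexp : Real.exp (k:ℝ) ≤ 3^k := by
    have h1 : Real.exp (k:ℝ) = Real.exp 1 ^ k := by
      rw [← Real.exp_nat_mul]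
      norm_num
    rw [h1]
    exact pow_le_pow_left₀ (Real.exp_pos 1).le
      (by have := Real.exp_one_lt_d9; linarith) k
  calc ((k:ℝ))^k = ((k:ℝ)^k / (Nat.factorial k : ℝ)) * (Nat.factorial k : ℝ) := by
        field_simp
    _ ≤ 3^k * (Nat.factorial k : ℝ) :=
        mul_le_mul_of_nonneg_right (hterm.trans hexp) hf.le

lemma choose_le_real {n k : ℕ} (hk : 1 ≤ k) :
    (n.choose k : ℝ) ≤ 3^k * (n:ℝ)^k / (k:ℝ)^k := by
  have hk0 : (0:ℝ) < (k:ℝ) := by exact_mod_cast hk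
  have hf : (0:ℝ) < (Nat.factorial k : ℝ) := by exact_mod_cast Nat.factorial_pos k
  have h1 : (n.choose k : ℝ) ≤ (n:ℝ)^k / (Nat.factorial k : ℝ) := by
    have := Nat.choose_le_pow_div (α := ℝ) k n
    exact_mod_cast this
  refine h1.trans ?_
  rw [div_le_div_iff₀ hf (by positivity)]
  calc (n:ℝ)^k * (k:ℝ)^k ≤ (n:ℝ)^k * (3^k * (Nat.factorial k : ℝ)) :=
        mul_le_mul_of_nonneg_left (pow_self_le_three_pow_factorial k) (by positivity)
    _ = 3^k * (n:ℝ)^k * (Nat.factorial k : ℝ) := by ring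

lemma core_bound {n k : ℕ} (hn : 1 ≤ n) (hk : 1 ≤ k) {M : ℝ} (hM : 750 ≤ M) :
    psi k * (n.choose k : ℝ) ≤ (M^2)^(k-1) * (1/(k:ℝ)) * (2*(n:ℝ)/(k:ℝ))^k := by
  have hk0 : (0:ℝ) < (k:ℝ) := by exact_mod_cast hk
  have hn0 : (0:ℝ) < (n:ℝ) := by exact_mod_cast hn
  have hM0 : (0:ℝ) < M := by linarith
  have hMsq : (562500:ℝ) ≤ M^2 := by nlinarith
  have hxk : (2*(n:ℝ)/(k:ℝ))^k = 2^k * (n:ℝ)^k / (k:ℝ)^k := by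
    rw [div_pow, mul_pow]
  rcases Nat.eq_or_lt_of_le hk with heq | hlt
  · -- k = 1
    subst heq
    rw [psi_of_pos le_rfl]
    simp only [Nat.choose_one_right, pow_one, Nat.cast_one, pow_zero]
    norm_num
    linarith
  · -- k ≥ 2
    have hk2 : 2 ≤ k := hlt
    have hC := choose_le_real (n := n) hk
    have step1 : psi k * (n.choose k : ℝ) ≤
        (500^(k-1) * 3^k / (k:ℝ)^2) * ((n:ℝ)^k / (k:ℝ)^k) := by
      rw [psi_of_pos hk]
      calc 500^(k-1) / (k:ℝ)^2 * (n.choose k : ℝ)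
          ≤ 500^(k-1) / (k:ℝ)^2 * (3^k * (n:ℝ)^k / (k:ℝ)^k) :=
            mul_le_mul_of_nonneg_left hC (by positivity)
        _ = (500^(k-1) * 3^k / (k:ℝ)^2) * ((n:ℝ)^k / (k:ℝ)^k) := by ring
    have hnum : (500:ℝ)^(k-1) * 3^k ≤ 562500^(k-1) * 2^k := by
      have e3 : (3:ℝ)^k = 3^(k-1) * 3 := by
        rw [← pow_succ]
        congr 1
        omega
      have h1 : (500:ℝ)^(k-1) * 3^k = 1500^(k-1) * 3 := by
        rw [e3, show (1500:ℝ) = 500 * 3 by norm_num, mul_pow]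
        ring
      have h2 : (1500:ℝ)^(k-1) ≤ 562500^(k-1) :=
        pow_le_pow_left₀ (by norm_num) (by norm_num) _
      have h3 : (3:ℝ) ≤ 2^k := by
        calc (3:ℝ) ≤ 4 := by norm_num
        _ = 2^2 := by norm_num
        _ ≤ 2^k := pow_le_pow_right₀ (by norm_num) hk2
      calc (500:ℝ)^(k-1) * 3^k = 1500^(k-1) * 3 := h1
        _ ≤ 562500^(k-1) * 2^k :=
          mul_le_mul h2 h3 (by norm_num) (by positivity)
    have key : (500:ℝ)^(k-1) * 3^k / (k:ℝ)^2 ≤ 562500^(k-1) * 2^k / (k:ℝ) := by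
      have hk1r : (1:ℝ) ≤ (k:ℝ) := by exact_mod_cast hk
      have h4 : (k:ℝ) ≤ (k:ℝ)^2 := by nlinarith
      calc (500:ℝ)^(k-1) * 3^k / (k:ℝ)^2 ≤ (500:ℝ)^(k-1) * 3^k / (k:ℝ) :=
            div_le_div_of_nonneg_left (by positivity) hk0 h4
        _ ≤ 562500^(k-1) * 2^k / (k:ℝ) := (div_le_div_iff_of_pos_right hk0).mpr hnum
    calc psi k * (n.choose k : ℝ)
        ≤ (500^(k-1) * 3^k / (k:ℝ)^2) * ((n:ℝ)^k / (k:ℝ)^k) := step1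
      _ ≤ (562500^(k-1) * 2^k / (k:ℝ)) * ((n:ℝ)^k / (k:ℝ)^k) :=
            mul_le_mul_of_nonneg_right key (by positivity)
      _ = 562500^(k-1) * (1/(k:ℝ)) * (2*(n:ℝ)/(k:ℝ))^k := by
            rw [hxk]
            ring
      _ ≤ (M^2)^(k-1) * (1/(k:ℝ)) * (2*(n:ℝ)/(k:ℝ))^k := by
            apply mul_le_mul_of_nonneg_right ?_ (by positivity)
            apply mul_le_mul_of_nonneg_right ?_ (by positivity)
            exact pow_le_pow_left₀ (by norm_num) hMsq _

end Final
section Assemble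
open Finset

lemma final_bound {n k : ℕ} (hn : 1 ≤ n) (hk : 1 ≤ k) :
    Real.sqrt (psi k) * Real.sqrt (n.choose k : ℝ) ≤
      ((2 + Real.sqrt 2) * 250) ^ (k - 1) / Real.sqrt k *
        (2 * (n : ℝ) / k) ^ ((k : ℝ) / 2) := by
  set M : ℝ := (2 + Real.sqrt 2) * 250 with hMdef
  have hs2 : (1:ℝ) ≤ Real.sqrt 2 := by
    rw [Real.one_le_sqrt]
    norm_num
  have hM : 750 ≤ M := by rw [hMdef]; nlinarith
  have hM0 : (0:ℝ) < M := by linarith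
  have hk0 : (0:ℝ) < (k:ℝ) := by exact_mod_cast hk
  have hn0 : (0:ℝ) < (n:ℝ) := by exact_mod_cast hn
  have hx0 : (0:ℝ) ≤ 2*(n:ℝ)/(k:ℝ) := by positivity
  -- rewrite RHS rpow as a square root
  have hrpow : (2 * (n : ℝ) / k) ^ ((k : ℝ) / 2) = Real.sqrt ((2*(n:ℝ)/(k:ℝ))^k) := by
    rw [Real.sqrt_eq_rpow, ← Real.rpow_natCast (2*(n:ℝ)/(k:ℝ)) k, ← Real.rpow_mul hx0]
    congr 1
    ring
  have hsq : Real.sqrt ((M^2)^(k-1) * (1/(k:ℝ)) * (2*(n:ℝ)/(k:ℝ))^k)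
      = M ^ (k-1) / Real.sqrt k * Real.sqrt ((2*(n:ℝ)/(k:ℝ))^k) := by
    rw [Real.sqrt_mul (by positivity), Real.sqrt_mul (by positivity)]
    have h1 : Real.sqrt ((M^2)^(k-1)) = M^(k-1) := by
      rw [← pow_right_comm, Real.sqrt_sq (by positivity)]
    have h2 : Real.sqrt (1/(k:ℝ)) = 1/Real.sqrt k := by
      rw [one_div, one_div, Real.sqrt_inv]
    rw [h1, h2]
    ring
  rw [hrpow, ← hsq, ← Real.sqrt_mul (psi_pos k).le]
  exact Real.sqrt_le_sqrt (core_bound hn hk hM)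

lemma goodpart_to_partition {I : Finset ℕ} {A : Finset (Finset ℕ)} {s : ℝ}
    (h : GoodPart I A s) :
    ∃ (N : ℕ) (E : Fin N → Finset (Finset ℕ)),
      IsElemPartition A E ∧ ∑ i, Real.sqrt ((E i).card) ≤ s := by
  obtain ⟨S, hel, hdisj, hun, hcost⟩ := h
  refine ⟨S.card, fun i => (S.equivFin.symm i : Finset (Finset ℕ)), ⟨?_, ?_, ?_⟩, ?_⟩
  · intro i
    obtain ⟨L, h1, h2, h3, h4⟩ := hel _ (S.equivFin.symm i).2
    exact ⟨L, h1, fun p hp => ⟨(h2 p hp).1, (h2 p hp).2.2⟩, h3, h4⟩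
  · intro i j hij
    refine hdisj (S.equivFin.symm i).2 (S.equivFin.symm j).2 ?_
    intro heq
    apply hij
    have := Subtype.coe_injective heq
    exact S.equivFin.symm.injective this ▸ rfl
  · ext X
    simp only [Finset.mem_biUnion, Finset.mem_univ, true_and, id_eq]
    rw [← hun]
    constructor
    · rintro ⟨i, hX⟩
      exact Finset.mem_biUnion.mpr ⟨_, (S.equivFin.symm i).2, hX⟩
    · intro hX
      obtain ⟨E, hE, hXE⟩ := Finset.mem_biUnion.mp hX
      refine ⟨S.equivFin ⟨E, hE⟩, ?_⟩
      rw [Equiv.symm_apply_apply]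
      exact hXE
  · refine le_trans (le_of_eq ?_) hcost
    rw [← Finset.sum_coe_sort S (fun E => Real.sqrt ((E : Finset (Finset ℕ)).card))]
    exact Equiv.sum_comp S.equivFin.symm
      (fun x : {x // x ∈ S} => Real.sqrt (((x : Finset (Finset ℕ))).card))

end Assemble

end Helpers

theorem efficient_elementary_partition :
    ∃ c : ℝ, 1 ≤ c ∧ ∀ n k : ℕ, 1 ≤ n → 1 ≤ k →
      ∃ (N : ℕ) (E : Fin N → Finset (Finset ℕ)),
        IsElemPartition (Finset.powersetCard k (Finset.Icc 1 n)) E ∧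
          ∑ i, Real.sqrt ((E i).card) ≤
            ((2 + Real.sqrt 2) * c) ^ (k - 1) / Real.sqrt k *
              (2 * (n : ℝ) / k) ^ ((k : ℝ) / 2) := by
  refine ⟨250, by norm_num, fun n k hn hk => ?_⟩
  have hcard : (Finset.Icc 1 n).card = n := by
    rw [Nat.card_Icc]
    omega
  have hgp := main_induction n 1 n k hcard
  obtain ⟨N, E, hpart, hsum⟩ := goodpart_to_partition hgp
  exact ⟨N, E, hpart, hsum.trans (final_bound hn hk)⟩
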